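/- Let H be a real Hilbert space, v : H → H Lipschitz with constant L and β-strongly monotone with β > 0, and suppose v(x*) = 0 for some x* ∈ H. Let 0 < γ < min(1/(2L), β/L²) and define the extragradient iteration x_{n+1} = x_n - γ v(x_n - γ v(x_n)). Then for all n, ‖x_{n+1} - x*‖² ≤ (1 - 2γβ + 4γ²βL)‖x_n - x*‖² + γ²(γL²/β - 1)‖v(x_n - γ v(x_n))‖². -/

import Mathlib

open scoped RealInnerProductSpace

lemma key_scalar (a b c d γ L β : ℝ) (hβ : 0 < β) (hL : 0 < L) (hγ0 : 0 < γ)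
    (hγ1 : 2*γ*L < 1) (hγ2 : γ*L^2 < β)
    (ha : 0 ≤ a) (hb : 0 ≤ b) (hc : 0 ≤ c) (hcLa : c ≤ L*a)
    (hd : a - γ*c ≤ d) (hd0 : 0 ≤ d) :
    a^2 - 2*γ*(β*d^2 + γ*(b^2 - γ*L*c*b)) + γ^2*b^2 ≤
      (1 - 2*γ*β + 4*γ^2*β*L)*a^2 + γ^2*(γ*L^2/β - 1)*b^2 := by
  set q : ℝ := γ*L^2/β with hqdef
  have hq : q*β = γ*L^2 := by rw [hqdef]; field_simp [hβ.ne']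
  have h0 : 0 ≤ a - γ*c := by nlinarith
  have hdsq : (a - γ*c)^2 ≤ d^2 := by nlinarith
  have hsq : 0 ≤ γ^3*(L*b - β*c)^2 := by positivity
  have hAM' : 2*(γ^3*L)*(c*b)*β ≤ (γ^2*q*b^2 + γ^3*β*c^2)*β := by
    have hq2 : γ^2*q*b^2*β = γ^3*L^2*b^2 := by
      rw [show γ^2*q*b^2*β = γ^2*(q*β)*b^2 by ring, hq]; ring
    nlinarith [hsq, hq2]
  have hAM : 2*(γ^3*L)*(c*b) ≤ γ^2*q*b^2 + γ^3*β*c^2 := le_of_mul_le_mul_right hAM' hβ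
  nlinarith [hAM, hdsq, mul_nonneg (mul_nonneg (mul_nonneg (sq_nonneg γ) hβ.le) ha) (sub_nonneg.2 hcLa), mul_pos hγ0 hβ, mul_nonneg (mul_nonneg (mul_nonneg (mul_nonneg hγ0.le hγ0.le) hγ0.le) hβ.le) (sq_nonneg c)]

theorem stmt4 {H : Type*} [NormedAddCommGroup H] [InnerProductSpace ℝ H] [CompleteSpace H]
    (v : H → H) (L β : ℝ) (hL : 0 < L) (hβ : 0 < β)
    (hLip : ∀ x y : H, ‖v x - v y‖ ≤ L * ‖x - y‖)
    (hmon : ∀ x y : H, β * ‖x - y‖ ^ 2 ≤ ⟪v x - v y, x - y⟫)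
    (xs : H) (hzero : v xs = 0)
    (γ : ℝ) (hγ0 : 0 < γ) (hγ : γ < min (1 / (2 * L)) (β / L ^ 2))
    (x : ℕ → H)
    (hrec : ∀ n : ℕ, x (n + 1) = x n - γ • v (x n - γ • v (x n))) :
    ∀ n : ℕ,
      ‖x (n + 1) - xs‖ ^ 2 ≤
        (1 - 2 * γ * β + 4 * γ ^ 2 * β * L) * ‖x n - xs‖ ^ 2 +
          γ ^ 2 * (γ * L ^ 2 / β - 1) * ‖v (x n - γ • v (x n))‖ ^ 2 := by
  intro n
  have hγ1 : 2*γ*L < 1 := by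
    have h := (lt_min_iff.mp hγ).1
    rw [lt_div_iff₀ (by positivity)] at h; linarith
  have hγ2 : γ*L^2 < β := by
    have h := (lt_min_iff.mp hγ).2
    rw [lt_div_iff₀ (by positivity)] at h; linarith
  set y : H := x n - γ • v (x n) with hy
  set w : H := v y with hw
  set a : ℝ := ‖x n - xs‖ with hadef
  set b : ℝ := ‖w‖ with hbdef
  set c : ℝ := ‖v (x n)‖ with hcdef
  set d : ℝ := ‖y - xs‖ with hddef
  -- Lipschitz bound on c
  have hcLa : c ≤ L * a := by
    have h := hLip (x n) xs
    rwa [hzero, sub_zero] at h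
  -- d ≥ a - γ c
  have hd : a - γ*c ≤ d := by
    have h := norm_sub_norm_le (x n - xs) (γ • v (x n))
    have he : (x n - xs) - γ • v (x n) = y - xs := by rw [hy]; abel
    rw [he] at h
    have hn : ‖γ • v (x n)‖ = γ * c := by
      simp [norm_smul, abs_of_pos hγ0, hcdef]
    rw [hn] at h
    exact h
  -- strong monotonicity at y, xs
  have h1 : β * d^2 ≤ ⟪y - xs, w⟫ := by
    have h := hmon y xs
    rwa [hzero, sub_zero, real_inner_comm] at h
  -- inner product bound with v (x n)
  have h3 : b^2 - γ*L*c*b ≤ ⟪v (x n), w⟫ := by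
    have hlip : ‖v (x n) - w‖ ≤ L * (γ * c) := by
      have h := hLip (x n) y
      have : ‖x n - y‖ = γ * c := by
        rw [hy]; simp [norm_smul, abs_of_pos hγ0, hcdef]
      rwa [this] at h
    have hcs : ⟪v (x n) - w, w⟫ ≥ -(L*(γ*c)*b) := by
      have := abs_real_inner_le_norm (v (x n) - w) w
      have h2 := neg_abs_le ⟪v (x n) - w, w⟫
      nlinarith [mul_le_mul_of_nonneg_right hlip (norm_nonneg w)]
    have hexp : ⟪v (x n), w⟫ = ⟪v (x n) - w, w⟫ + ⟪w, w⟫ := by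
      rw [← inner_add_left]; rw [sub_add_cancel]
    rw [hexp, real_inner_self_eq_norm_sq]
    nlinarith [hcs]
  -- decomposition of the inner product
  have hE2 : ⟪x n - xs, w⟫ = ⟪y - xs, w⟫ + γ * ⟪v (x n), w⟫ := by
    rw [← real_inner_smul_left, ← inner_add_left]
    congr 1
    rw [hy]; abel
  -- norm expansion
  have hE1 : ‖x (n+1) - xs‖^2 = a^2 - 2*γ*⟪x n - xs, w⟫ + γ^2*b^2 := by
    have : x (n+1) - xs = (x n - xs) - γ • w := by
      rw [hrec n, ← hy, ← hw]; abel
    rw [this, @norm_sub_sq_real, real_inner_smul_right, norm_smul]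
    rw [hadef, hbdef]
    rw [Real.norm_eq_abs, abs_of_pos hγ0]
    ring
  have ha : 0 ≤ a := norm_nonneg _
  have hb : 0 ≤ b := norm_nonneg _
  have hc : 0 ≤ c := norm_nonneg _
  have hd0 : 0 ≤ d := norm_nonneg _
  have key := key_scalar a b c d γ L β hβ hL hγ0 hγ1 hγ2 ha hb hc hcLa hd hd0
  rw [hE1]
  calc a^2 - 2*γ*⟪x n - xs, w⟫ + γ^2*b^2
      ≤ a^2 - 2*γ*(β*d^2 + γ*(b^2 - γ*L*c*b)) + γ^2*b^2 := by
        rw [hE2]; nlinarith [h1, h3]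
    _ ≤ (1 - 2*γ*β + 4*γ^2*β*L)*a^2 + γ^2*(γ*L^2/β - 1)*b^2 := key
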